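/- Let R satisfy (∗) and let a ∈ A. Consider the greedy procedure: initialize N' = N and A' = A; while N' ≠ ∅, if no agent i ∈ N' has a ∈ max_{R_i}(A') the procedure fails, otherwise pick the least such agent i, remove i from N', and replace A' by max_{R_i}(A'). Then a is in the support of the RSD lottery (i.e., sd(R,π) = {a} for some permutation π of N) if and only if the greedy procedure never fails; moreover, in that case the order π* in which the agents are picked by the procedure satisfies sd(R,π*) = {a}. -/

import Mathlib

open scoped Classical

/-- `maxSet r B` is the set of most preferred alternatives from `B`
according to the (weak) preference relation `r`. -/
def maxSet {A : Type*} (r : A → A → Prop) (B : Set A) : Set A :=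
  {x | x ∈ B ∧ ∀ y ∈ B, r x y}

/-- `sdPrefix R π t` is the set of alternatives surviving serial dictatorship after the
first `t` dictators `π 0, …, π (t-1)` have refined the set, starting from all of `A`. -/
def sdPrefix {n : ℕ} {A : Type*} (R : Fin n → A → A → Prop) (π : Equiv.Perm (Fin n)) :
    ℕ → Set A
  | 0 => Set.univ
  | t + 1 => if h : t < n then maxSet (R (π ⟨t, h⟩)) (sdPrefix R π t) else sdPrefix R π t

/-- Serial dictatorship: the set of alternatives remaining after all `n` dictators. -/
def sd {n : ℕ} {A : Type*} (R : Fin n → A → A → Prop) (π : Equiv.Perm (Fin n)) : Set A :=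
  sdPrefix R π n

/-- The greedy procedure of Algorithm 1: given a working set `N'` of agents and a working
set `A'` of alternatives, repeatedly pick the least agent `i ∈ N'` having `a` among his most
preferred alternatives in `A'` (failing, i.e. returning `none`, if there is no such agent),
remove `i` from `N'` and replace `A'` by `maxSet (R i) A'`, until `N' = ∅`.  On success it
returns the list of picked agents in order. `fuel` bounds the number of iterations. -/
noncomputable def greedy {n : ℕ} {A : Type*} (R : Fin n → A → A → Prop) (a : A) :
    ℕ → Finset (Fin n) → Set A → Option (List (Fin n))
  | 0, _, _ => some []
  | fuel + 1, N', A' =>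
      if N' = ∅ then some []
      else
        let C := N'.filter (fun i => a ∈ maxSet (R i) A')
        if h : C.Nonempty then
          let i := C.min' h
          (greedy R a fuel (N'.erase i) (maxSet (R i) A')).map (fun L => i :: L)
        else none

section Aux

variable {n : ℕ} {A : Type*}

/-- Fold of `maxSet` along a list of agents. -/
def run (R : Fin n → A → A → Prop) : List (Fin n) → Set A → Set A
  | [], S => S
  | i :: L, S => run R L (maxSet (R i) S)

lemma maxSet_subset (r : A → A → Prop) (S : Set A) : maxSet r S ⊆ S := fun _ hx => hx.1

lemma run_subset (R : Fin n → A → A → Prop) :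
    ∀ (L : List (Fin n)) (S : Set A), run R L S ⊆ S
  | [], _ => subset_rfl
  | i :: L, S => (run_subset R L _).trans (maxSet_subset _ _)

lemma run_append (R : Fin n → A → A → Prop) :
    ∀ (X Y : List (Fin n)) (S : Set A), run R (X ++ Y) S = run R Y (run R X S)
  | [], _, _ => rfl
  | i :: X, Y, S => run_append R X Y _

lemma maxSet_of_subset {r : A → A → Prop} (hr : Transitive r) {S T : Set A} {a : A}
    (hTS : T ⊆ S) (haS : a ∈ maxSet r S) (haT : a ∈ T) :
    a ∈ maxSet r T ∧ maxSet r T ⊆ maxSet r S :=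
  ⟨⟨haT, fun y hy => haS.2 y (hTS hy)⟩,
   fun x hx => ⟨hTS hx.1, fun y hy => hr (hx.2 a haT) (haS.2 y hy)⟩⟩

lemma run_mono (R : Fin n → A → A → Prop) (htrans : ∀ i, Transitive (R i)) {a : A} :
    ∀ (L : List (Fin n)) {S T : Set A}, T ⊆ S → a ∈ T → a ∈ run R L S →
      a ∈ run R L T ∧ run R L T ⊆ run R L S
  | [], _, _, hTS, haT, _ => ⟨haT, hTS⟩
  | i :: L, S, T, hTS, haT, haS => by
      have haMS : a ∈ maxSet (R i) S := run_subset R L _ haS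
      obtain ⟨h1, h2⟩ := maxSet_of_subset (htrans i) hTS haMS haT
      exact run_mono R htrans L h2 h1 haS

lemma exchange (R : Fin n → A → A → Prop) (htrans : ∀ i, Transitive (R i)) {a : A} {i : Fin n}
    {L : List (Fin n)} {A' : Set A} (hnd : L.Nodup) (hiL : i ∈ L) (ha : a ∈ run R L A')
    (hamax : a ∈ maxSet (R i) A') : a ∈ run R (L.erase i) (maxSet (R i) A') := by
  obtain ⟨L1, L2, rfl⟩ := List.append_of_mem hiL
  have hiL1 : i ∉ L1 := by
    have h := List.disjoint_of_nodup_append hnd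
    exact fun hmem => h hmem List.mem_cons_self
  have herase : (L1 ++ i :: L2).erase i = L1 ++ L2 := by
    rw [List.erase_append_right _ hiL1, List.erase_cons_head]
  rw [herase, run_append]
  rw [run_append] at ha
  have ha' : a ∈ run R L2 (maxSet (R i) (run R L1 A')) := ha
  have haL1 : a ∈ run R L1 A' := run_subset R (i :: L2) _ ha
  obtain ⟨h1, h2⟩ := run_mono R htrans L1 (maxSet_subset (R i) A') hamax haL1
  have hsub : run R L1 (maxSet (R i) A') ⊆ maxSet (R i) (run R L1 A') := by
    intro x hx
    have hx1 : x ∈ maxSet (R i) A' := run_subset R L1 _ hx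
    exact ⟨h2 hx, fun y hy => hx1.2 y (run_subset R L1 A' hy)⟩
  exact (run_mono R htrans L2 hsub h1 ha').1

lemma run_univ_singleton (R : Fin n → A → A → Prop)
    (hstar : ∀ a b : A, (∀ i, R i a b ∧ R i b a) → a = b) {a : A} {L : List (Fin n)}
    (hall : ∀ i : Fin n, i ∈ L) (ha : a ∈ run R L Set.univ) : run R L Set.univ = {a} := by
  ext b
  simp only [Set.mem_singleton_iff]
  constructor
  · intro hb
    refine hstar b a fun i => ?_
    obtain ⟨L1, L2, hLeq⟩ := List.append_of_mem (hall i)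
    rw [hLeq, run_append] at hb ha
    have hb' : b ∈ maxSet (R i) (run R L1 Set.univ) := run_subset R L2 _ hb
    have ha' : a ∈ maxSet (R i) (run R L1 Set.univ) := run_subset R L2 _ ha
    exact ⟨hb'.2 a ha'.1, ha'.2 b hb'.1⟩
  · rintro rfl; exact ha

lemma sdPrefix_eq_run (R : Fin n → A → A → Prop) (π : Equiv.Perm (Fin n)) {L : List (Fin n)}
    (hL : ∀ t : Fin n, L[(t : ℕ)]? = some (π t)) :
    ∀ t, t ≤ n → sdPrefix R π t = run R (L.take t) Set.univ := by
  intro t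
  induction t with
  | zero => intro _; rfl
  | succ t ih =>
    intro ht
    have htn : t < n := ht
    have hget : L[t]? = some (π ⟨t, htn⟩) := hL ⟨t, htn⟩
    have htake : L.take (t + 1) = L.take t ++ [π ⟨t, htn⟩] := by
      rw [List.take_succ, hget]; rfl
    rw [sdPrefix, dif_pos htn, ih (le_of_lt htn), htake, run_append]
    rfl

lemma greedy_sound (R : Fin n → A → A → Prop) {a : A} :
    ∀ (fuel : ℕ) (N' : Finset (Fin n)) (A' : Set A), N'.card = fuel → a ∈ A' →
      ∀ L, greedy R a fuel N' A' = some L → L.Nodup ∧ L.toFinset = N' ∧ a ∈ run R L A'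
  | 0, N', A', hcard, haA, L, hL => by
      rw [greedy] at hL
      cases hL
      refine ⟨List.nodup_nil, ?_, haA⟩
      simp [Finset.card_eq_zero.mp hcard]
  | fuel + 1, N', A', hcard, haA, L, hL => by
      have hN : N' ≠ ∅ := by
        intro h; rw [h] at hcard; simp at hcard
      rw [greedy] at hL
      simp only [if_neg hN] at hL
      by_cases hC : (N'.filter fun i => a ∈ maxSet (R i) A').Nonempty
      · rw [dif_pos hC] at hL
        set i := (N'.filter fun i => a ∈ maxSet (R i) A').min' hC with hidef
        have hiC := Finset.min'_mem _ hC
        rw [Finset.mem_filter] at hiC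
        obtain ⟨L', hL', rfl⟩ := Option.map_eq_some_iff.mp hL
        have hcard' : (N'.erase i).card = fuel := by
          rw [Finset.card_erase_of_mem hiC.1, hcard]; rfl
        obtain ⟨h1, h2, h3⟩ := greedy_sound R fuel _ _ hcard' hiC.2 L' hL'
        have hiL' : i ∉ L' := by
          rw [← List.mem_toFinset, h2]
          exact Finset.notMem_erase i N'
        refine ⟨List.nodup_cons.mpr ⟨hiL', h1⟩, ?_, h3⟩
        rw [List.toFinset_cons, h2, Finset.insert_erase hiC.1]
      · rw [dif_neg hC] at hL
        exact absurd hL (by simp)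

lemma greedy_complete (R : Fin n → A → A → Prop) (htrans : ∀ i, Transitive (R i)) {a : A} :
    ∀ (fuel : ℕ) (N' : Finset (Fin n)) (A' : Set A), N'.card = fuel →
      ∀ L : List (Fin n), L.Nodup → L.toFinset = N' → a ∈ run R L A' →
        (greedy R a fuel N' A').isSome = true
  | 0, _, _, _, _, _, _, _ => by rw [greedy]; rfl
  | fuel + 1, N', A', hcard, L, hnd, hfin, ha => by
      have hN : N' ≠ ∅ := by
        intro h; rw [h] at hcard; simp at hcard
      obtain ⟨j, L', rfl⟩ : ∃ j L', L = j :: L' := by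
        cases L with
        | nil => exact absurd (hfin.symm.trans rfl) hN
        | cons j L' => exact ⟨j, L', rfl⟩
      have hjmax : a ∈ maxSet (R j) A' := run_subset R L' _ ha
      have hjN : j ∈ N' := by rw [← hfin]; simp
      have hC : (N'.filter fun i => a ∈ maxSet (R i) A').Nonempty :=
        ⟨j, Finset.mem_filter.mpr ⟨hjN, hjmax⟩⟩
      set i := (N'.filter fun i => a ∈ maxSet (R i) A').min' hC with hidef
      have hiC := Finset.min'_mem _ hC
      rw [Finset.mem_filter] at hiC
      have hiL : i ∈ j :: L' := by rw [← List.mem_toFinset, hfin]; exact hiC.1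
      have hex : a ∈ run R ((j :: L').erase i) (maxSet (R i) A') :=
        exchange R htrans hnd hiL ha hiC.2
      have hcard' : (N'.erase i).card = fuel := by
        rw [Finset.card_erase_of_mem hiC.1, hcard]; rfl
      have hfin' : ((j :: L').erase i).toFinset = N'.erase i := by
        ext x
        rw [List.mem_toFinset, hnd.mem_erase_iff, Finset.mem_erase]
        simp [← hfin]
      have hrec := greedy_complete R htrans fuel (N'.erase i) (maxSet (R i) A') hcard'
        ((j :: L').erase i) (hnd.erase i) hfin' hex
      rw [greedy]
      simp only [if_neg hN, dif_pos hC]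
      rw [Option.isSome_map]
      exact hrec

end Aux

/-- Correctness of the greedy procedure (Algorithm 1): for a complete and transitive profile
`R` satisfying (∗), an alternative `a` is in the support of the RSD lottery (i.e. `sd R π = {a}`
for some permutation `π`) iff the greedy procedure started from `N' = N` and `A' = A` never
fails; moreover, on success, the permutation `π*` listing the agents in the order they were
picked satisfies `sd R π* = {a}`. -/


theorem greedy_characterizes_rsd_support {n : ℕ} {A : Type*} [Finite A] [Nonempty A]
    (R : Fin n → A → A → Prop)
    (hcomp : ∀ i x y, R i x y ∨ R i y x)
    (htrans : ∀ i, Transitive (R i))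
    (hstar : ∀ a b : A, (∀ i, R i a b ∧ R i b a) → a = b)
    (a : A) :
    ((∃ π : Equiv.Perm (Fin n), sd R π = {a}) ↔
        (greedy R a n Finset.univ Set.univ).isSome = true) ∧
      ∀ L : List (Fin n), greedy R a n Finset.univ Set.univ = some L →
        ∀ π : Equiv.Perm (Fin n), (∀ t : Fin n, L[t.1]? = some (π t)) →
          sd R π = {a} := by
  have hlistsd : ∀ (π : Equiv.Perm (Fin n)) (L : List (Fin n)), L.length = n →
      (∀ t : Fin n, L[(t : ℕ)]? = some (π t)) → sd R π = run R L Set.univ := by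
    intro π L hlen hget
    have h := sdPrefix_eq_run R π hget n le_rfl
    rw [sd, h, List.take_of_length_le hlen.le]
  have hmain2 : ∀ L : List (Fin n), greedy R a n Finset.univ Set.univ = some L →
      ∀ π : Equiv.Perm (Fin n), (∀ t : Fin n, L[(t : ℕ)]? = some (π t)) → sd R π = {a} := by
    intro L hL π hget
    obtain ⟨h1, h2, h3⟩ := greedy_sound R n Finset.univ Set.univ (by simp) (Set.mem_univ a) L hL
    have hlen : L.length = n := by
      rw [← List.toFinset_card_of_nodup h1, h2]; simp
    rw [hlistsd π L hlen hget]
    exact run_univ_singleton R hstar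
      (fun i => by rw [← List.mem_toFinset, h2]; exact Finset.mem_univ i) h3
  refine ⟨⟨?_, ?_⟩, hmain2⟩
  · rintro ⟨π, hπ⟩
    set L : List (Fin n) := List.ofFn (fun k => π k) with hLdef
    have hlen : L.length = n := List.length_ofFn
    have hget : ∀ t : Fin n, L[(t : ℕ)]? = some (π t) := by
      intro t
      rw [List.getElem?_eq_getElem (by rw [hlen]; exact t.isLt)]
      simp [hLdef]
    have hnd : L.Nodup := List.nodup_ofFn.mpr π.injective
    have hfin : L.toFinset = Finset.univ := by
      ext i
      simp only [List.mem_toFinset, hLdef, List.mem_ofFn, Finset.mem_univ, iff_true]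
      exact ⟨π.symm i, π.apply_symm_apply i⟩
    have ha : a ∈ run R L Set.univ := by
      rw [← hlistsd π L hlen hget, hπ]; rfl
    exact greedy_complete R htrans n Finset.univ Set.univ (by simp) L hnd hfin ha
  · intro hs
    obtain ⟨L, hL⟩ := Option.isSome_iff_exists.mp hs
    obtain ⟨h1, h2, h3⟩ := greedy_sound R n Finset.univ Set.univ (by simp) (Set.mem_univ a) L hL
    have hlen : L.length = n := by rw [← List.toFinset_card_of_nodup h1, h2]; simp
    have hinj : Function.Injective (fun t : Fin n => L.get (Fin.cast hlen.symm t)) := by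
      intro s t hst
      have h := List.nodup_iff_injective_get.mp h1 hst
      exact Fin.ext (by simpa using congrArg Fin.val h)
    have hbij := Finite.injective_iff_bijective.mp hinj
    refine ⟨Equiv.ofBijective _ hbij, ?_⟩
    apply hmain2 L hL
    intro t
    rw [List.getElem?_eq_getElem (by rw [hlen]; exact t.isLt)]
    rfl
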